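/- If X_1, ..., X_n are independent real random variables where X_i has sub-Gaussian constant b_i (meaning E[|X_i − E[X_i]|^p]^{1/p} ≤ b_i √p for all p ≥ 1), then ∑_{i=1}^n X_i has sub-Gaussian constant C·√(∑_{i=1}^n b_i²) for some absolute constant C. -/

import Mathlib

open MeasureTheory ProbabilityTheory
open Real
open scoped ENNReal NNReal

/-- A real random variable `X` has sub-Gaussian constant `b ≥ 0` (w.r.t. the probability
measure `μ`) if all its centered absolute moments exist and satisfy
`E[|X − E[X]|^p]^(1/p) ≤ b √p` for every real `p ≥ 1`. -/
def HasSubgaussianConst {Ω : Type*} [MeasurableSpace Ω] (μ : Measure Ω)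
    (X : Ω → ℝ) (b : ℝ) : Prop :=
  ∀ p : ℝ, 1 ≤ p →
    Integrable (fun ω => |X ω - ∫ x, X x ∂μ| ^ p) μ ∧
    (∫ ω, |X ω - ∫ x, X x ∂μ| ^ p ∂μ) ^ (1 / p) ≤ b * Real.sqrt p

lemma auxA (x : ℝ) : Real.exp x ≤ x + Real.exp (x ^ 2) := by
  rcases le_or_gt 1 x with h | h
  · have h1 : Real.exp x ≤ Real.exp (x ^ 2) := by
      apply Real.exp_le_exp.2; nlinarith
    linarith
  rcases le_or_gt x (-1) with h' | h'
  · have h1 : Real.exp x ≤ 1 := Real.exp_le_one_iff.2 (by linarith)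
    have h2 : x ^ 2 + 1 ≤ Real.exp (x ^ 2) := Real.add_one_le_exp _
    nlinarith
  · have hx : |x| ≤ 1 := abs_le.2 ⟨h'.le, h.le⟩
    have hb := Real.exp_bound hx (n := 2) (by norm_num)
    have h2 : Real.exp x ≤ 1 + x + |x| ^ 2 * (3 / 4) := by
      have : ∑ m ∈ Finset.range 2, x ^ m / m.factorial = 1 + x := by
        simp [Finset.sum_range_succ]
      rw [this] at hb
      have := (abs_sub_le_iff.1 hb).1
      norm_num at this ⊢
      linarith
    have h3 : x ^ 2 + 1 ≤ Real.exp (x ^ 2) := Real.add_one_le_exp _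
    have h4 : |x| ^ 2 = x ^ 2 := sq_abs x
    nlinarith

lemma auxB {x p : ℝ} (hx : 0 ≤ x) (hp : 0 < p) :
    x ^ p ≤ p ^ p * Real.exp (x - p) := by
  rcases eq_or_lt_of_le hx with h | hxp
  · rw [← h, Real.zero_rpow hp.ne']
    positivity
  · have h1 : Real.log (x / p) ≤ x / p - 1 := Real.log_le_sub_one_of_pos (by positivity)
    have h2 : Real.log (x / p) = Real.log x - Real.log p := Real.log_div hxp.ne' hp.ne'
    have h3 : p * Real.log x ≤ p * Real.log p + (x - p) := by
      rw [h2] at h1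
      have := mul_le_mul_of_nonneg_left h1 hp.le
      have hxp' : p * (x / p - 1) = x - p := by field_simp
      nlinarith
    calc x ^ p = Real.exp (Real.log x * p) := by
          rw [Real.rpow_def_of_pos hxp]
      _ ≤ Real.exp (Real.log p * p + (x - p)) := by
          apply Real.exp_le_exp.2; nlinarith
      _ = p ^ p * Real.exp (x - p) := by
          rw [Real.exp_add, Real.rpow_def_of_pos hp]

lemma auxFact (k : ℕ) : (k : ℝ) ^ k / (Nat.factorial k) ≤ Real.exp 1 ^ k := by
  have := Real.pow_div_factorial_le_exp (x := (k : ℝ)) (Nat.cast_nonneg k) k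
  have h2 : Real.exp (k : ℝ) = Real.exp 1 ^ k := by
    rw [← Real.exp_nat_mul, mul_one]
  rwa [h2] at this
lemma auxC {Ω : Type} [MeasurableSpace Ω] (μ : Measure Ω) [IsProbabilityMeasure μ]
    {Y : Ω → ℝ} (hY : Measurable Y) {b : ℝ} (hb : 0 ≤ b)
    (hmom : ∀ k : ℕ, 0 < k → Integrable (fun ω => Y ω ^ (2 * k)) μ ∧
      ∫ ω, Y ω ^ (2 * k) ∂μ ≤ ((2 * k : ℝ) * b ^ 2) ^ k)
    {r : ℝ} (hr : 0 ≤ r) (hrb : 2 * Real.exp 1 * r * b ^ 2 ≤ 1 / 2) :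
    Integrable (fun ω => Real.exp (r * Y ω ^ 2)) μ ∧
      ∫ ω, Real.exp (r * Y ω ^ 2) ∂μ ≤ Real.exp (4 * Real.exp 1 * r * b ^ 2) := by
  set u : ℝ := 2 * Real.exp 1 * r * b ^ 2 with hu
  have hu0 : 0 ≤ u := by positivity
  have hpt : ∀ ω, ENNReal.ofReal (Real.exp (r * Y ω ^ 2)) =
      ∑' k : ℕ, ENNReal.ofReal ((r * Y ω ^ 2) ^ k / (Nat.factorial k)) := by
    intro ω
    have hexp : Real.exp (r * Y ω ^ 2) = ∑' k : ℕ, (r * Y ω ^ 2) ^ k / (Nat.factorial k) := by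
      rw [Real.exp_eq_exp_ℝ, NormedSpace.exp_eq_tsum_div]
    rw [hexp]
    exact ENNReal.ofReal_tsum_of_nonneg (fun k => by positivity)
      (Real.summable_pow_div_factorial _)
  have hterm : ∀ k : ℕ, ∫⁻ ω, ENNReal.ofReal ((r * Y ω ^ 2) ^ k / (Nat.factorial k)) ∂μ
      ≤ ENNReal.ofReal (u ^ k) := by
    intro k
    rcases Nat.eq_zero_or_pos k with hk | hk
    · subst hk; simp
    · obtain ⟨hint, hbd⟩ := hmom k hk
      have hint' : Integrable (fun ω => (r * Y ω ^ 2) ^ k / (Nat.factorial k)) μ := by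
        have heq : (fun ω => (r * Y ω ^ 2) ^ k / (Nat.factorial k))
            = fun ω => (r ^ k / (Nat.factorial k)) * Y ω ^ (2 * k) := by
          funext ω; rw [mul_pow, pow_mul]; ring
        rw [heq]; exact hint.const_mul _
      rw [← ofReal_integral_eq_lintegral_ofReal hint'
        (Filter.Eventually.of_forall (fun ω => by positivity))]
      apply ENNReal.ofReal_le_ofReal
      have heq2 : ∫ ω, (r * Y ω ^ 2) ^ k / (Nat.factorial k) ∂μ
          = (r ^ k / (Nat.factorial k)) * ∫ ω, Y ω ^ (2 * k) ∂μ := by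
        rw [← integral_const_mul]; congr 1; funext ω; rw [mul_pow, pow_mul]; ring
      rw [heq2]
      have h2 : (r ^ k / (Nat.factorial k)) * ∫ ω, Y ω ^ (2 * k) ∂μ
          ≤ (r ^ k / (Nat.factorial k)) * ((2 * k : ℝ) * b ^ 2) ^ k :=
        mul_le_mul_of_nonneg_left hbd (by positivity)
      refine h2.trans ?_
      have h3 : (r ^ k / (Nat.factorial k)) * ((2 * k : ℝ) * b ^ 2) ^ k
          = (2 * r * b ^ 2) ^ k * ((k : ℝ) ^ k / (Nat.factorial k)) := by
        rw [mul_pow, mul_pow]; ring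
      rw [h3, hu]
      calc (2 * r * b ^ 2) ^ k * ((k : ℝ) ^ k / (Nat.factorial k))
          ≤ (2 * r * b ^ 2) ^ k * Real.exp 1 ^ k :=
            mul_le_mul_of_nonneg_left (auxFact k) (by positivity)
        _ = (2 * Real.exp 1 * r * b ^ 2) ^ k := by rw [← mul_pow]; ring_nf
  have hmeas : Measurable fun ω => Real.exp (r * Y ω ^ 2) :=
    (((hY.pow_const 2).const_mul r)).exp
  have hlin : ∫⁻ ω, ENNReal.ofReal (Real.exp (r * Y ω ^ 2)) ∂μ
      ≤ ENNReal.ofReal ((1 - u)⁻¹) := by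
    have h1u : (0:ℝ) < 1 - u := by linarith
    calc ∫⁻ ω, ENNReal.ofReal (Real.exp (r * Y ω ^ 2)) ∂μ
        = ∑' k : ℕ, ∫⁻ ω, ENNReal.ofReal ((r * Y ω ^ 2) ^ k / (Nat.factorial k)) ∂μ := by
          simp_rw [hpt]
          exact lintegral_tsum (fun k =>
            ((((hY.pow_const 2).const_mul r).pow_const k).div_const _).ennreal_ofReal.aemeasurable)
      _ ≤ ∑' k : ℕ, ENNReal.ofReal (u ^ k) := ENNReal.tsum_le_tsum hterm
      _ = ∑' k : ℕ, (ENNReal.ofReal u) ^ k := by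
          congr 1; funext k; exact ENNReal.ofReal_pow hu0 k
      _ = (1 - ENNReal.ofReal u)⁻¹ := ENNReal.tsum_geometric _
      _ = ENNReal.ofReal ((1 - u)⁻¹) := by
          rw [ENNReal.ofReal_inv_of_pos h1u, ENNReal.ofReal_sub 1 hu0, ENNReal.ofReal_one]
  have hfin : Integrable (fun ω => Real.exp (r * Y ω ^ 2)) μ := by
    refine ⟨hmeas.aestronglyMeasurable, ?_⟩
    rw [hasFiniteIntegral_iff_ofReal
      (Filter.Eventually.of_forall fun ω => (Real.exp_pos _).le)]
    exact lt_of_le_of_lt hlin ENNReal.ofReal_lt_top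
  refine ⟨hfin, ?_⟩
  have hnonneg : 0 ≤ᵐ[μ] fun ω => Real.exp (r * Y ω ^ 2) :=
    Filter.Eventually.of_forall fun ω => (Real.exp_pos _).le
  rw [integral_eq_lintegral_of_nonneg_ae hnonneg hmeas.aestronglyMeasurable]
  have h1u : (0:ℝ) < 1 - u := by linarith
  have hq := Real.quadratic_le_exp_of_nonneg (x := 2 * u) (by positivity)
  have hfinal : (1 - u)⁻¹ ≤ Real.exp (2 * u) := by
    rw [inv_eq_one_div, div_le_iff₀ h1u]
    nlinarith [hq, hu0, hrb, sq_nonneg u, mul_nonneg hu0 hu0]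
  have h2u : Real.exp (2 * u) = Real.exp (4 * Real.exp 1 * r * b ^ 2) := by
    rw [hu]; ring_nf
  calc (∫⁻ ω, ENNReal.ofReal (Real.exp (r * Y ω ^ 2)) ∂μ).toReal
      ≤ (ENNReal.ofReal ((1 - u)⁻¹)).toReal :=
        ENNReal.toReal_mono ENNReal.ofReal_ne_top hlin
    _ = (1 - u)⁻¹ := ENNReal.toReal_ofReal (by positivity)
    _ ≤ Real.exp (2 * u) := hfinal
    _ = Real.exp (4 * Real.exp 1 * r * b ^ 2) := h2u

lemma auxD {Ω : Type} [MeasurableSpace Ω] (μ : Measure Ω) [IsProbabilityMeasure μ]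
    {Y : Ω → ℝ} (hY : Measurable Y) {b : ℝ} (hb : 0 ≤ b)
    (hint1 : Integrable Y μ) (hmean : ∫ ω, Y ω ∂μ = 0)
    (habs : ∫ ω, |Y ω| ∂μ ≤ b)
    (hmom : ∀ k : ℕ, 0 < k → Integrable (fun ω => Y ω ^ (2 * k)) μ ∧
      ∫ ω, Y ω ^ (2 * k) ∂μ ≤ ((2 * k : ℝ) * b ^ 2) ^ k)
    (t : ℝ) :
    Integrable (fun ω => Real.exp (t * Y ω)) μ ∧
      ∫ ω, Real.exp (t * Y ω) ∂μ ≤ Real.exp (14 * b ^ 2 * t ^ 2) := by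
  have he : (0:ℝ) < Real.exp 1 := Real.exp_pos 1
  have he9 : Real.exp 1 < 2.7182818286 := Real.exp_one_lt_d9
  rcases eq_or_lt_of_le hb with hb0 | hbpos
  · -- b = 0 : Y = 0 a.e.
    have h0 : ∫ ω, |Y ω| ∂μ = 0 := by
      refine le_antisymm (by rw [← hb0] at habs; exact habs) ?_
      exact integral_nonneg fun ω => abs_nonneg _
    have hY0 : (fun ω => |Y ω|) =ᵐ[μ] 0 :=
      (integral_eq_zero_iff_of_nonneg (fun ω => abs_nonneg _) hint1.abs).1 h0
    have hYae : Y =ᵐ[μ] 0 := by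
      filter_upwards [hY0] with ω h
      simpa [abs_eq_zero] using h
    have hcong : (fun ω => Real.exp (t * Y ω)) =ᵐ[μ] fun _ => 1 := by
      filter_upwards [hYae] with ω h
      simp [h]
    refine ⟨(integrable_const 1).congr hcong.symm, ?_⟩
    rw [integral_congr_ae hcong]
    simp only [integral_const, measure_univ, probReal_univ, ENNReal.toReal_one, one_smul, smul_eq_mul, mul_one]
    exact Real.one_le_exp (by positivity)
  · -- b > 0
    set s : ℝ := (4 * Real.exp 1 * b ^ 2)⁻¹ with hs
    have hA : (0:ℝ) < 4 * Real.exp 1 * b ^ 2 := by positivity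
    have hs0 : 0 < s := by positivity
    have hsA : s * (4 * Real.exp 1 * b ^ 2) = 1 := inv_mul_cancel₀ hA.ne'
    have hsb : 2 * Real.exp 1 * s * b ^ 2 = 1 / 2 := by
      rw [hs]; field_simp; ring
    obtain ⟨hIs, hEs⟩ := auxC μ hY hb hmom hs0.le (le_of_eq hsb)
    have hEs' : ∫ ω, Real.exp (s * Y ω ^ 2) ∂μ ≤ Real.exp 1 := by
      refine hEs.trans (Real.exp_le_exp.2 (le_of_eq ?_))
      calc 4 * Real.exp 1 * s * b ^ 2 = s * (4 * Real.exp 1 * b ^ 2) := by ring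
        _ = 1 := hsA
    have hAM : ∀ ω, Real.exp (t * Y ω)
        ≤ Real.exp (Real.exp 1 * b ^ 2 * t ^ 2) * Real.exp (s * Y ω ^ 2) := by
      intro ω
      rw [← Real.exp_add]
      apply Real.exp_le_exp.2
      have h1 : t * Y ω ≤ |t| * |Y ω| := by
        rw [← abs_mul]; exact le_abs_self _
      refine h1.trans ?_
      have h2 : (4 * Real.exp 1 * b ^ 2) * (|t| * |Y ω|)
          ≤ (4 * Real.exp 1 * b ^ 2) * (Real.exp 1 * b ^ 2 * t ^ 2) + Y ω ^ 2 := by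
        rw [← abs_mul]
        rcases abs_cases (t * Y ω) with ⟨h, _⟩ | ⟨h, _⟩ <;> rw [h]
        · nlinarith [sq_nonneg (2 * Real.exp 1 * b ^ 2 * t - Y ω)]
        · nlinarith [sq_nonneg (2 * Real.exp 1 * b ^ 2 * t + Y ω)]
      have h3 := mul_le_mul_of_nonneg_left h2 hs0.le
      calc |t| * |Y ω|
          = s * ((4 * Real.exp 1 * b ^ 2) * (|t| * |Y ω|)) := by
            rw [← mul_assoc, hsA, one_mul]
        _ ≤ s * ((4 * Real.exp 1 * b ^ 2) * (Real.exp 1 * b ^ 2 * t ^ 2) + Y ω ^ 2) := h3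
        _ = Real.exp 1 * b ^ 2 * t ^ 2 + s * Y ω ^ 2 := by
            rw [mul_add, ← mul_assoc, hsA, one_mul]
    have hIntExp : Integrable (fun ω => Real.exp (t * Y ω)) μ :=
      Integrable.mono' (hIs.const_mul (Real.exp (Real.exp 1 * b ^ 2 * t ^ 2)))
        ((hY.const_mul t).exp.aestronglyMeasurable)
        (Filter.Eventually.of_forall fun ω => by
          rw [Real.norm_eq_abs, abs_of_pos (Real.exp_pos _)]; exact hAM ω)
    refine ⟨hIntExp, ?_⟩
    have hbt : (0:ℝ) ≤ b ^ 2 * t ^ 2 := by positivity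
    rcases le_or_gt (t ^ 2) s with h1 | h1
    · have hrb2 : 2 * Real.exp 1 * t ^ 2 * b ^ 2 ≤ 1 / 2 := by
        calc 2 * Real.exp 1 * t ^ 2 * b ^ 2 ≤ 2 * Real.exp 1 * s * b ^ 2 := by nlinarith
          _ = 1 / 2 := hsb
      obtain ⟨hIt, hEt⟩ := auxC μ hY hb hmom (sq_nonneg t) hrb2
      have hptw : ∀ ω, Real.exp (t * Y ω) ≤ t * Y ω + Real.exp (t ^ 2 * Y ω ^ 2) := by
        intro ω
        have h := auxA (t * Y ω)
        rwa [mul_pow] at h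
      have hintRHS : Integrable (fun ω => t * Y ω + Real.exp (t ^ 2 * Y ω ^ 2)) μ :=
        (hint1.const_mul t).add hIt
      calc ∫ ω, Real.exp (t * Y ω) ∂μ
          ≤ ∫ ω, (t * Y ω + Real.exp (t ^ 2 * Y ω ^ 2)) ∂μ :=
            integral_mono hIntExp hintRHS hptw
        _ = t * ∫ ω, Y ω ∂μ + ∫ ω, Real.exp (t ^ 2 * Y ω ^ 2) ∂μ := by
            rw [integral_add (hint1.const_mul t) hIt, integral_const_mul]
        _ ≤ Real.exp (4 * Real.exp 1 * t ^ 2 * b ^ 2) := by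
            rw [hmean, mul_zero, zero_add]; exact hEt
        _ ≤ Real.exp (14 * b ^ 2 * t ^ 2) := by
            apply Real.exp_le_exp.2; nlinarith
    · calc ∫ ω, Real.exp (t * Y ω) ∂μ
          ≤ ∫ ω, Real.exp (Real.exp 1 * b ^ 2 * t ^ 2) * Real.exp (s * Y ω ^ 2) ∂μ :=
            integral_mono hIntExp (hIs.const_mul _) hAM
        _ = Real.exp (Real.exp 1 * b ^ 2 * t ^ 2) * ∫ ω, Real.exp (s * Y ω ^ 2) ∂μ :=
            integral_const_mul _ _
        _ ≤ Real.exp (Real.exp 1 * b ^ 2 * t ^ 2) * Real.exp 1 :=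
            mul_le_mul_of_nonneg_left hEs' (Real.exp_pos _).le
        _ = Real.exp (Real.exp 1 * b ^ 2 * t ^ 2 + 1) := (Real.exp_add _ _).symm
        _ ≤ Real.exp (14 * b ^ 2 * t ^ 2) := by
            apply Real.exp_le_exp.2
            have h4 : 1 ≤ 4 * Real.exp 1 * b ^ 2 * t ^ 2 := by
              have h5 := mul_lt_mul_of_pos_left h1 hA
              nlinarith [hsA]
            nlinarith

lemma auxF {Ω : Type} [MeasurableSpace Ω] (μ : Measure Ω) [IsProbabilityMeasure μ]
    {Z : Ω → ℝ} (hZ : Measurable Z) {B : ℝ} (hB : 0 < B)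
    (hmgf : ∀ t : ℝ, Integrable (fun ω => Real.exp (t * Z ω)) μ ∧
      ∫ ω, Real.exp (t * Z ω) ∂μ ≤ Real.exp (14 * B ^ 2 * t ^ 2))
    {p : ℝ} (hp : 1 ≤ p) :
    Integrable (fun ω => |Z ω| ^ p) μ ∧
      (∫ ω, |Z ω| ^ p ∂μ) ^ (1 / p) ≤ 2 * Real.exp 13 * B * Real.sqrt p := by
  have hp0 : 0 < p := lt_of_lt_of_le one_pos hp
  have hsp : 0 < Real.sqrt p := Real.sqrt_pos.2 hp0
  set t : ℝ := Real.sqrt p / B with hts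
  have ht : 0 < t := by positivity
  have htp : 0 < t ^ p := Real.rpow_pos_of_pos ht p
  set K : ℝ := p ^ p * Real.exp (-p) / t ^ p with hK
  have hK0 : 0 < K := by positivity
  have hexp_rpow : ∀ a : ℝ, (Real.exp a) ^ p = Real.exp (a * p) := fun a => by
    rw [Real.rpow_def_of_pos (Real.exp_pos a), Real.log_exp]
  have hptw : ∀ ω, |Z ω| ^ p ≤ K * (Real.exp (t * Z ω) + Real.exp (-t * Z ω)) := by
    intro ω
    have h1 : (t * |Z ω|) ^ p ≤ p ^ p * Real.exp (t * |Z ω| - p) := auxB (by positivity) hp0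
    have h2 : Real.exp (t * |Z ω|) ≤ Real.exp (t * Z ω) + Real.exp (-t * Z ω) := by
      rcases abs_cases (Z ω) with ⟨h, _⟩ | ⟨h, _⟩ <;> rw [h]
      · nlinarith [Real.exp_pos (-t * Z ω)]
      · have hne : t * -Z ω = -t * Z ω := by ring
        rw [hne]
        nlinarith [Real.exp_pos (t * Z ω)]
    have h3 : (t * |Z ω|) ^ p = t ^ p * |Z ω| ^ p := Real.mul_rpow ht.le (abs_nonneg _)
    have h4 : t ^ p * |Z ω| ^ p
        ≤ p ^ p * Real.exp (-p) * (Real.exp (t * Z ω) + Real.exp (-t * Z ω)) := by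
      rw [← h3]
      refine h1.trans ?_
      calc p ^ p * Real.exp (t * |Z ω| - p)
          = p ^ p * Real.exp (-p) * Real.exp (t * |Z ω|) := by
            rw [mul_assoc, ← Real.exp_add]; ring_nf
        _ ≤ p ^ p * Real.exp (-p) * (Real.exp (t * Z ω) + Real.exp (-t * Z ω)) :=
            mul_le_mul_of_nonneg_left h2 (by positivity)
    have h5 : |Z ω| ^ p = (t ^ p * |Z ω| ^ p) / t ^ p := by
      field_simp
    rw [h5, hK, div_mul_eq_mul_div]
    exact (div_le_div_iff_of_pos_right htp).2 h4
  obtain ⟨hi1, he1⟩ := hmgf t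
  obtain ⟨hi2, he2⟩ := hmgf (-t)
  have hintRHS : Integrable (fun ω => K * (Real.exp (t * Z ω) + Real.exp (-t * Z ω))) μ :=
    (hi1.add hi2).const_mul K
  have hmeasZp : AEStronglyMeasurable (fun ω => |Z ω| ^ p) μ :=
    ((Real.continuous_rpow_const hp0.le).measurable.comp hZ.abs).aestronglyMeasurable
  have hIntZp : Integrable (fun ω => |Z ω| ^ p) μ :=
    hintRHS.mono' hmeasZp (Filter.Eventually.of_forall fun ω => by
      rw [Real.norm_eq_abs, abs_of_nonneg (Real.rpow_nonneg (abs_nonneg _) p)]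
      exact hptw ω)
  refine ⟨hIntZp, ?_⟩
  have hBt : 14 * B ^ 2 * t ^ 2 = 14 * p := by
    rw [hts, div_pow, Real.sq_sqrt hp0.le]
    field_simp
  have hpt : p / t = B * Real.sqrt p := by
    rw [hts, div_div_eq_mul_div, mul_comm p B, mul_div_assoc, Real.div_sqrt]
  have e2 : p ^ p / t ^ p = (B * Real.sqrt p) ^ p := by
    rw [← Real.div_rpow hp0.le ht.le, hpt]
  have hEbd : ∫ ω, |Z ω| ^ p ∂μ ≤ 2 * (B * Real.sqrt p * Real.exp 13) ^ p := by
    have h6 : ∫ ω, |Z ω| ^ p ∂μ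
        ≤ K * ((∫ ω, Real.exp (t * Z ω) ∂μ) + ∫ ω, Real.exp (-t * Z ω) ∂μ) := by
      calc ∫ ω, |Z ω| ^ p ∂μ
          ≤ ∫ ω, K * (Real.exp (t * Z ω) + Real.exp (-t * Z ω)) ∂μ :=
            integral_mono hIntZp hintRHS hptw
        _ = K * ((∫ ω, Real.exp (t * Z ω) ∂μ) + ∫ ω, Real.exp (-t * Z ω) ∂μ) := by
            rw [integral_const_mul, integral_add hi1 hi2]
    have he2' : ∫ ω, Real.exp (-t * Z ω) ∂μ ≤ Real.exp (14 * p) := by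
      refine he2.trans (le_of_eq ?_)
      rw [← hBt]; ring_nf
    have he1' : ∫ ω, Real.exp (t * Z ω) ∂μ ≤ Real.exp (14 * p) := by
      refine he1.trans (le_of_eq ?_)
      rw [← hBt]
    have h7 : K * ((∫ ω, Real.exp (t * Z ω) ∂μ) + ∫ ω, Real.exp (-t * Z ω) ∂μ)
        ≤ K * (2 * Real.exp (14 * p)) := by
      apply mul_le_mul_of_nonneg_left _ hK0.le
      linarith
    refine h6.trans (h7.trans (le_of_eq ?_))
    have hKval : K = (B * Real.sqrt p) ^ p * Real.exp (-p) := by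
      rw [hK, ← e2]; ring
    rw [hKval, Real.mul_rpow (by positivity) (Real.exp_pos 13).le, hexp_rpow]
    rw [show Real.exp (13 * p) = Real.exp (-p) * Real.exp (14 * p) by
      rw [← Real.exp_add]; congr 1; ring]
    ring
  have hintnn : 0 ≤ ∫ ω, |Z ω| ^ p ∂μ :=
    integral_nonneg fun ω => Real.rpow_nonneg (abs_nonneg _) p
  have hfin : (∫ ω, |Z ω| ^ p ∂μ) ^ (1 / p)
      ≤ (2 * (B * Real.sqrt p * Real.exp 13) ^ p) ^ (1 / p) :=
    Real.rpow_le_rpow hintnn hEbd (by positivity)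
  refine hfin.trans ?_
  have hAnn : (0:ℝ) ≤ B * Real.sqrt p * Real.exp 13 := by positivity
  rw [Real.mul_rpow (by norm_num) (Real.rpow_nonneg hAnn p)]
  have hAr : ((B * Real.sqrt p * Real.exp 13) ^ p) ^ (1 / p) = B * Real.sqrt p * Real.exp 13 := by
    rw [← Real.rpow_mul hAnn, mul_one_div_cancel hp0.ne', Real.rpow_one]
  rw [hAr]
  have h2r : (2:ℝ) ^ (1/p) ≤ 2 := by
    calc (2:ℝ) ^ (1/p) ≤ (2:ℝ) ^ (1:ℝ) :=
      Real.rpow_le_rpow_of_exponent_le (by norm_num) (by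
        rw [div_le_one hp0]; linarith)
      _ = 2 := Real.rpow_one 2
  calc (2:ℝ) ^ (1/p) * (B * Real.sqrt p * Real.exp 13)
      ≤ 2 * (B * Real.sqrt p * Real.exp 13) := mul_le_mul_of_nonneg_right h2r hAnn
    _ = 2 * Real.exp 13 * B * Real.sqrt p := by ring

/-- If `X_1, ..., X_n` are independent real random variables where `X_i` has
sub-Gaussian constant `b_i`, then `∑ X_i` has sub-Gaussian constant `C √(∑ b_i²)` for some
absolute constant `C`. -/
theorem stmt10 :
    ∃ C : ℝ, 0 < C ∧
      ∀ (n : ℕ) (Ω : Type) (_ : MeasurableSpace Ω) (μ : Measure Ω),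
        IsProbabilityMeasure μ →
        ∀ (X : Fin n → Ω → ℝ) (b : Fin n → ℝ),
          (∀ i, 0 ≤ b i) →
          (∀ i, Measurable (X i)) →
          iIndepFun X μ →
          (∀ i, HasSubgaussianConst μ (X i) (b i)) →
          HasSubgaussianConst μ (fun ω => ∑ i, X i ω)
            (C * Real.sqrt (∑ i, (b i) ^ 2)) := by
  refine ⟨2 * Real.exp 13, by positivity, ?_⟩
  intro n Ω mΩ μ hμ X b hb hXm hindep hsub
  set c : Fin n → ℝ := fun i => ∫ x, X i x ∂μ with hc
  set Y : Fin n → Ω → ℝ := fun i => (fun x => x - c i) ∘ X i with hYdef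
  have hYm : ∀ i, Measurable (Y i) := fun i => (hXm i).sub measurable_const
  have hYabs_int : ∀ i, Integrable (fun ω => |Y i ω|) μ := by
    intro i
    have h := (hsub i 1 le_rfl).1
    simpa [Real.rpow_one, hYdef, hc] using h
  have hYint : ∀ i, Integrable (Y i) μ := by
    intro i
    have h := hYabs_int i
    simp only [← Real.norm_eq_abs] at h
    exact (integrable_norm_iff ((hYm i).aestronglyMeasurable)).1 h
  have hXint : ∀ i, Integrable (X i) μ := by
    intro i
    have h := (hYint i).add (integrable_const (c i))
    refine h.congr (Filter.Eventually.of_forall fun ω => ?_)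
    simp [hYdef]
  have hmeanY : ∀ i, ∫ ω, Y i ω ∂μ = 0 := by
    intro i
    have h : ∫ ω, (X i ω - c i) ∂μ = (∫ ω, X i ω ∂μ) - c i := by
      rw [integral_sub (hXint i) (integrable_const _), integral_const]
      simp
    have heq : (fun ω => Y i ω) = fun ω => X i ω - c i := by
      funext ω; simp [hYdef]
    rw [heq, h, hc]
    simp
  have habsY : ∀ i, ∫ ω, |Y i ω| ∂μ ≤ b i := by
    intro i
    have h := (hsub i 1 le_rfl).2
    simpa [Real.rpow_one, Real.sqrt_one, hYdef, hc] using h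
  have hmomY : ∀ i, ∀ k : ℕ, 0 < k → Integrable (fun ω => Y i ω ^ (2 * k)) μ ∧
      ∫ ω, Y i ω ^ (2 * k) ∂μ ≤ ((2 * k : ℝ) * b i ^ 2) ^ k := by
    intro i k hk
    have hk1 : (1:ℝ) ≤ ((2 * k : ℕ) : ℝ) := by
      have : 1 ≤ 2 * k := by omega
      exact_mod_cast this
    obtain ⟨h1, h2⟩ := hsub i (((2 * k : ℕ)) : ℝ) hk1
    set q : ℝ := ((2 * k : ℕ) : ℝ) with hq
    have hq0 : (0:ℝ) < q := lt_of_lt_of_le one_pos hk1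
    have hptc : ∀ ω, |X i ω - ∫ x, X i x ∂μ| ^ q = Y i ω ^ (2 * k) := by
      intro ω
      rw [hq, Real.rpow_natCast]
      exact Even.pow_abs (even_two_mul k) _
    have h1' : Integrable (fun ω => Y i ω ^ (2 * k)) μ :=
      h1.congr (Filter.Eventually.of_forall hptc)
    refine ⟨h1', ?_⟩
    have hInn : 0 ≤ ∫ ω, |X i ω - ∫ x, X i x ∂μ| ^ q ∂μ :=
      integral_nonneg fun ω => Real.rpow_nonneg (abs_nonneg _) _
    have h4 := Real.rpow_le_rpow (Real.rpow_nonneg hInn _) h2 hq0.le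
    rw [← Real.rpow_mul hInn, one_div_mul_cancel hq0.ne', Real.rpow_one] at h4
    have h5 : ∫ ω, Y i ω ^ (2 * k) ∂μ = ∫ ω, |X i ω - ∫ x, X i x ∂μ| ^ q ∂μ :=
      (integral_congr_ae (Filter.Eventually.of_forall hptc)).symm
    rw [h5]
    refine h4.trans (le_of_eq ?_)
    have hc2 : (b i * Real.sqrt q) ^ q = ((b i * Real.sqrt q) ^ 2) ^ k := by
      rw [hq, Real.rpow_natCast, pow_mul]
    rw [hc2, mul_pow, Real.sq_sqrt hq0.le]
    have : q = (2 * k : ℝ) := by rw [hq]; push_cast; ring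
    rw [this]
    ring
  have hmgfY : ∀ i (t : ℝ), Integrable (fun ω => Real.exp (t * Y i ω)) μ ∧
      ∫ ω, Real.exp (t * Y i ω) ∂μ ≤ Real.exp (14 * b i ^ 2 * t ^ 2) :=
    fun i t => auxD μ (hYm i) (hb i) (hYint i) (hmeanY i) (habsY i) (hmomY i) t
  have hindepY : iIndepFun Y μ :=
    hindep.comp (fun i => fun x => x - c i) (fun i => measurable_id.sub measurable_const)
  set B : ℝ := Real.sqrt (∑ i, b i ^ 2) with hB
  have hBsq : B ^ 2 = ∑ i, b i ^ 2 :=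
    Real.sq_sqrt (Finset.sum_nonneg fun i _ => sq_nonneg _)
  have hmgfS : ∀ t : ℝ, Integrable (fun ω => Real.exp (t * (∑ i, Y i ω))) μ ∧
      ∫ ω, Real.exp (t * (∑ i, Y i ω)) ∂μ ≤ Real.exp (14 * B ^ 2 * t ^ 2) := by
    intro t
    have happ : (fun ω => Real.exp (t * (∑ i, Y i) ω)) = fun ω => Real.exp (t * ∑ i, Y i ω) := by
      funext ω; simp
    have hInt : Integrable (fun ω => Real.exp (t * ∑ i, Y i ω)) μ := by
      have h := hindepY.integrable_exp_mul_sum hYm (s := Finset.univ)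
        (fun i _ => (hmgfY i t).1)
      rwa [happ] at h
    refine ⟨hInt, ?_⟩
    have hprod : mgf (∑ i, Y i) μ t = ∏ i, mgf (Y i) μ t := hindepY.mgf_sum hYm Finset.univ
    have hmgf_eq : ∫ ω, Real.exp (t * ∑ i, Y i ω) ∂μ = mgf (∑ i, Y i) μ t := by
      rw [mgf]
      exact integral_congr_ae (Filter.Eventually.of_forall fun ω => by simp)
    rw [hmgf_eq, hprod]
    calc ∏ i, mgf (Y i) μ t ≤ ∏ i, Real.exp (14 * b i ^ 2 * t ^ 2) := by
          refine Finset.prod_le_prod (fun i _ => mgf_nonneg) (fun i _ => ?_)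
          exact (hmgfY i t).2
      _ = Real.exp (∑ i, 14 * b i ^ 2 * t ^ 2) := (Real.exp_sum _ _).symm
      _ = Real.exp (14 * B ^ 2 * t ^ 2) := by
          rw [hBsq, Finset.mul_sum, Finset.sum_mul]
  have hsum_int : ∫ ω, (∑ i, X i ω) ∂μ = ∑ i, c i := by
    rw [integral_finset_sum Finset.univ (fun i _ => hXint i)]
  have hZeq : ∀ ω : Ω, (∑ i, X i ω) - ∫ x, (∑ i, X i x) ∂μ = ∑ i, Y i ω := by
    intro ω
    rw [hsum_int, ← Finset.sum_sub_distrib]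
    exact Finset.sum_congr rfl fun i _ => by simp [hYdef]
  intro p hp
  have hp0 : (0:ℝ) < p := lt_of_lt_of_le one_pos hp
  rcases eq_or_lt_of_le (Finset.sum_nonneg (fun (i : Fin n) _ => sq_nonneg (b i))) with h0 | hpos
  · -- degenerate case : all b i = 0
    have hb0 : ∀ i, b i = 0 := by
      intro i
      have h := (Finset.sum_eq_zero_iff_of_nonneg
        (fun (i : Fin n) _ => sq_nonneg (b i))).1 h0.symm i (Finset.mem_univ i)
      exact pow_eq_zero_iff (two_ne_zero) |>.1 h
    have hYae : ∀ᵐ ω ∂μ, ∀ i, Y i ω = 0 := by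
      rw [ae_all_iff]
      intro i
      have h0' : ∫ ω, |Y i ω| ∂μ = 0 := by
        refine le_antisymm ?_ (integral_nonneg fun ω => abs_nonneg _)
        have := habsY i
        rwa [hb0 i] at this
      have hae := (integral_eq_zero_iff_of_nonneg
        (fun ω => abs_nonneg _) (hYabs_int i)).1 h0'
      filter_upwards [hae] with ω h
      simpa [abs_eq_zero] using h
    have hZae : (fun ω => |(∑ i, X i ω) - ∫ x, (∑ i, X i x) ∂μ| ^ p) =ᵐ[μ]
        (fun _ => (0:ℝ)) := by
      filter_upwards [hYae] with ω h
      rw [hZeq ω, Finset.sum_eq_zero (fun i _ => h i)]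
      simp [Real.zero_rpow hp0.ne']
    constructor
    · exact (integrable_const (0:ℝ)).congr hZae.symm
    · rw [integral_congr_ae hZae, integral_const]
      have hB0 : B = 0 := by rw [hB, ← h0, Real.sqrt_zero]
      rw [hB0, smul_zero, Real.zero_rpow (by positivity : (1/p) ≠ 0)]
      simp
  · -- main case
    have hBpos : 0 < B := Real.sqrt_pos.2 hpos
    have hZmeas : Measurable (fun ω => (∑ i, X i ω) - ∫ x, (∑ i, X i x) ∂μ) :=
      (Finset.measurable_sum Finset.univ (fun i _ => hXm i)).sub measurable_const
    have hmgfZ : ∀ t : ℝ,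
        Integrable (fun ω => Real.exp (t * ((∑ i, X i ω) - ∫ x, (∑ i, X i x) ∂μ))) μ ∧
        ∫ ω, Real.exp (t * ((∑ i, X i ω) - ∫ x, (∑ i, X i x) ∂μ)) ∂μ
          ≤ Real.exp (14 * B ^ 2 * t ^ 2) := by
      intro t
      obtain ⟨h1, h2⟩ := hmgfS t
      have heqf : (fun ω => Real.exp (t * ((∑ i, X i ω) - ∫ x, (∑ i, X i x) ∂μ)))
          = fun ω => Real.exp (t * ∑ i, Y i ω) := by
        funext ω; rw [hZeq ω]
      rw [heqf]
      exact ⟨h1, h2⟩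
    exact auxF μ hZmeas hBpos hmgfZ hp
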